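/- (Lemma 2, case (i)) Let k ∈ ℝ and x ∈ [0,1). There exists n₀ ∈ ℕ such that for all n ≥ n₀ with x + r_n(x,k) ∈ [−1/3, 2/3), Δ_n(x,k) = c_n(0,x) − ∫₀¹ c_n(v,x) dv + (x − 2/3)·(1 − c_n(0,x)·(n+1)/(n+x)) + r_{n+1}(x,k) − ((n+1)/(n+x))·c_n(0,x)·r_n(x,k). -/

import Mathlib

open MeasureTheory ProbabilityTheory Filter Real Set
open scoped ENNReal NNReal

/-- Distribution of `Z_λ = N_λ + U`, `N_λ` Poisson(λ), `U` uniform on `(0,1)`, independent. -/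
noncomputable def zMeasure (l : ℝ) : Measure ℝ :=
  Measure.map (fun p : ℝ × ℝ => p.1 + p.2)
    ((Measure.map (Nat.cast : ℕ → ℝ) (poissonMeasure l.toNNReal)).prod
      (volume.restrict (Set.Ioo (0 : ℝ) 1)))

/-- The median of `Z_λ`: `inf {t : P(Z_λ ≤ t) ≥ 1/2}`. -/
noncomputable def medianZ (l : ℝ) : ℝ :=
  sInf {t : ℝ | (1 : ℝ≥0∞) / 2 ≤ zMeasure l (Set.Iic t)}

/-- The function `H` of the main theorem. -/
noncomputable def Hfun (x : ℝ) : ℝ :=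
  if x ≤ 2 / 3 then x ^ 2 * (x - 1) / 3 + 4 / 135
  else x / 3 * (x ^ 2 - 4 * x + 5) - 86 / 135

/-- `w_n(x,k) = P(Z_{n+x} ≤ n + x + 1/3 + k/(n+x))`. -/
noncomputable def w (n : ℕ) (x k : ℝ) : ℝ :=
  (zMeasure (n + x) (Set.Iic ((n : ℝ) + x + 1 / 3 + k / (n + x)))).toReal

/-- `r_n(x,k) = k/(n+x)`. -/
noncomputable def r (n : ℕ) (x k : ℝ) : ℝ := k / (n + x)

/-- `g_n(u) = e^{-u} u^n`. -/
noncomputable def g (n : ℕ) (u : ℝ) : ℝ := Real.exp (-u) * u ^ n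

/-- `c_n(v,x) = ((n+v+x)/(n+1+x))^{n+1} e^{1-v}`. -/
noncomputable def c (n : ℕ) (v x : ℝ) : ℝ :=
  (((n : ℝ) + v + x) / ((n : ℝ) + 1 + x)) ^ (n + 1) * Real.exp (1 - v)

/-- `Δ_n(x,k) = ((n+1)!/g_{n+1}(n+1+x)) (w_{n+1}(x,k) - w_n(x,k))`. -/
noncomputable def Δfun (n : ℕ) (x k : ℝ) : ℝ :=
  ((n + 1).factorial : ℝ) / g (n + 1) ((n : ℝ) + 1 + x) * (w (n + 1) x k - w n x k)

lemma zMeasure_Iic_toReal (l : ℝ) (m : ℕ) (f : ℝ) (hf0 : 0 ≤ f) (hf1 : f < 1) :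
    (zMeasure l (Set.Iic ((m : ℝ) + f))).toReal
      = ∑ j ∈ Finset.range m, poissonPMFReal l.toNNReal j
        + poissonPMFReal l.toNNReal m * f := by
  set t : ℝ := (m : ℝ) + f with ht
  set ν : Measure ℝ := volume.restrict (Set.Ioo (0 : ℝ) 1) with hν
  set P : Measure ℕ := poissonMeasure l.toNNReal with hP
  have hmeas : MeasurableSet {p : ℝ × ℝ | p.1 + p.2 ≤ t} :=
    measurableSet_le (measurable_fst.add measurable_snd) measurable_const
  have h1 : zMeasure l (Set.Iic t)
      = ((Measure.map (Nat.cast : ℕ → ℝ) P).prod ν) {p : ℝ × ℝ | p.1 + p.2 ≤ t} := by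
    rw [zMeasure, Measure.map_apply (f := fun p : ℝ × ℝ => p.1 + p.2) (measurable_fst.add measurable_snd) measurableSet_Iic]
    rfl
  have key : zMeasure l (Set.Iic t)
      = ENNReal.ofReal (∑ j ∈ Finset.range m, poissonPMFReal l.toNNReal j
        + poissonPMFReal l.toNNReal m * f) := by
    rw [h1, Measure.prod_apply hmeas]
    have hsec : ∀ a : ℝ, (Prod.mk a ⁻¹' {p : ℝ × ℝ | p.1 + p.2 ≤ t}) = Set.Iic (t - a) := by
      intro a; ext b; simp [Set.mem_Iic]; constructor <;> intro h <;> linarith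
    simp_rw [hsec]
    have hmono : Measurable fun a : ℝ => ν (Set.Iic (t - a)) := by
      have h2 : Monotone fun s : ℝ => ν (Set.Iic s) :=
        fun s1 s2 h12 => measure_mono (Set.Iic_subset_Iic.mpr h12)
      exact h2.measurable.comp (measurable_const.sub measurable_id)
    rw [MeasureTheory.lintegral_map hmono measurable_from_nat,
      MeasureTheory.lintegral_countable']
    have hPs : ∀ j : ℕ, P {j} = ENNReal.ofReal (poissonPMFReal l.toNNReal j) := by
      intro j
      rw [hP, poissonMeasure_singleton]
      rfl
    have hval : ∀ j : ℕ, ν (Set.Iic (t - j))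
        = if j < m then 1 else if j = m then ENNReal.ofReal f else 0 := by
      intro j
      rw [hν, Measure.restrict_apply measurableSet_Iic]
      rcases lt_trichotomy j m with h | h | h
      · rw [if_pos h]
        have hsub : Set.Iic (t - j) ∩ Set.Ioo (0:ℝ) 1 = Set.Ioo (0:ℝ) 1 := by
          apply Set.inter_eq_right.mpr
          intro b hb
          have hjm : (j : ℝ) + 1 ≤ (m : ℝ) := by exact_mod_cast h
          have : b ≤ t - j := by
            rcases hb with ⟨hb1, hb2⟩
            simp only [ht]; linarith
          exact this
        rw [hsub, Real.volume_Ioo]; norm_num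
      · rw [if_neg (by omega), if_pos h]
        have : t - (j:ℝ) = f := by rw [ht, h]; ring
        rw [this]
        have hsub : Set.Iic f ∩ Set.Ioo (0:ℝ) 1 = Set.Ioc (0:ℝ) f := by
          ext b; simp only [Set.mem_inter_iff, Set.mem_Iic, Set.mem_Ioo, Set.mem_Ioc]
          constructor
          · rintro ⟨h1, h2, h3⟩; exact ⟨h2, h1⟩
          · rintro ⟨h1, h2⟩; exact ⟨h2, h1, lt_of_le_of_lt h2 hf1⟩
        rw [hsub, Real.volume_Ioc]; norm_num
      · rw [if_neg (by omega), if_neg (by omega)]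
        have hsub : Set.Iic (t - j) ∩ Set.Ioo (0:ℝ) 1 = ∅ := by
          apply Set.eq_empty_of_forall_notMem
          rintro b ⟨h1, h2, h3⟩
          have hjm : (m : ℝ) + 1 ≤ (j : ℝ) := by exact_mod_cast h
          rw [Set.mem_Iic] at h1
          simp only [ht] at h1
          linarith
        rw [hsub]; simp
    have hzero : ∀ j ∉ Finset.range (m+1), ν (Set.Iic (t - j)) * P {j} = 0 := by
      intro j hj
      rw [hval j, if_neg (by simp at hj; omega), if_neg (by simp at hj; omega), zero_mul]
    rw [tsum_eq_sum hzero, Finset.sum_range_succ]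
    have hsum : ∀ j ∈ Finset.range m, ν (Set.Iic (t - j)) * P {j}
        = ENNReal.ofReal (poissonPMFReal l.toNNReal j) := by
      intro j hj
      rw [hval j, if_pos (Finset.mem_range.mp hj), one_mul, hPs]
    rw [Finset.sum_congr rfl hsum, hval m, if_neg (by omega), if_pos rfl, hPs,
      ← ENNReal.ofReal_mul hf0,
      ENNReal.ofReal_add (Finset.sum_nonneg fun j _ => poissonPMFReal_nonneg)
        (mul_nonneg poissonPMFReal_nonneg hf0),
      ENNReal.ofReal_sum_of_nonneg (fun j _ => poissonPMFReal_nonneg)]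
    ring
  rw [key, ENNReal.toReal_ofReal]
  exact add_nonneg (Finset.sum_nonneg fun j _ => poissonPMFReal_nonneg)
    (mul_nonneg poissonPMFReal_nonneg hf0)

lemma hasDerivAt_psum (n : ℕ) (l : ℝ) :
    HasDerivAt (fun t => ∑ j ∈ Finset.range (n+1), Real.exp (-t) * t^j / (j.factorial : ℝ))
      (-(Real.exp (-l) * l^n / (n.factorial : ℝ))) l := by
  have hP : HasDerivAt (fun t : ℝ => ∑ j ∈ Finset.range (n+1), t^j / (j.factorial : ℝ))
      (∑ j ∈ Finset.range n, l^j / (j.factorial : ℝ)) l := by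
    have h1 : HasDerivAt (fun t : ℝ => ∑ j ∈ Finset.range (n+1), t^j / (j.factorial : ℝ))
        (∑ j ∈ Finset.range (n+1), ((j : ℝ) * l^(j-1) / (j.factorial : ℝ))) l := by
      apply HasDerivAt.fun_sum
      intro j _
      exact (hasDerivAt_pow j l).div_const _
    convert h1 using 1
    rw [Finset.sum_range_succ']
    simp only [Nat.cast_zero, Nat.factorial_zero, Nat.cast_one, zero_mul, zero_div, add_zero]
    apply Finset.sum_congr rfl
    intro j _
    have : ((j+1).factorial : ℝ) = (j+1) * (j.factorial : ℝ) := by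
      rw [Nat.factorial_succ]; push_cast; ring
    rw [this]
    have hj : ((j:ℕ)+1) - 1 = j := by omega
    rw [hj]
    push_cast
    have hjpos : (0:ℝ) < (j:ℝ) + 1 := by positivity
    have hfpos : (0:ℝ) < (j.factorial : ℝ) := by positivity
    field_simp
  have hE : HasDerivAt (fun t : ℝ => Real.exp (-t)) (-Real.exp (-l)) l := by
    simpa [Function.comp_def] using (Real.hasDerivAt_exp (-l)).comp l (hasDerivAt_neg l)
  have h2 := hE.fun_mul hP
  have hfun : (fun t : ℝ => ∑ j ∈ Finset.range (n+1), Real.exp (-t) * t^j / (j.factorial : ℝ))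
      = fun t : ℝ => Real.exp (-t) * ∑ j ∈ Finset.range (n+1), t^j / (j.factorial : ℝ) := by
    funext t
    rw [Finset.mul_sum]
    apply Finset.sum_congr rfl
    intro j _; ring
  rw [hfun]
  refine h2.congr_deriv ?_
  rw [Finset.sum_range_succ]
  ring

lemma lambda_ftc (n : ℕ) (a : ℝ) :
    (∑ j ∈ Finset.range (n+1), Real.exp (-(a+1)) * (a+1)^j / (j.factorial : ℝ))
      - (∑ j ∈ Finset.range (n+1), Real.exp (-a) * a^j / (j.factorial : ℝ))
      = - ∫ t in a..(a+1), Real.exp (-t) * t^n / (n.factorial : ℝ) := by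
  have h := intervalIntegral.integral_eq_sub_of_hasDerivAt
    (f := fun t => ∑ j ∈ Finset.range (n+1), Real.exp (-t) * t^j / (j.factorial : ℝ))
    (f' := fun t => -(Real.exp (-t) * t^n / (n.factorial : ℝ)))
    (a := a) (b := a+1)
    (fun t _ => hasDerivAt_psum n t)
    (by
      apply Continuous.intervalIntegrable
      continuity)
  rw [← h, intervalIntegral.integral_neg]

lemma v_ftc (n : ℕ) (a : ℝ) :
    (∫ t in a..(a+1), (((n:ℝ)+1) * (Real.exp (-t) * t^n) - Real.exp (-t) * t^(n+1)))
      = Real.exp (-(a+1)) * (a+1)^(n+1) - Real.exp (-a) * a^(n+1) := by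
  apply intervalIntegral.integral_eq_sub_of_hasDerivAt
    (f := fun t => Real.exp (-t) * t^(n+1))
  · intro t _
    have hE : HasDerivAt (fun t : ℝ => Real.exp (-t)) (-Real.exp (-t)) t := by
      simpa [Function.comp_def] using (Real.hasDerivAt_exp (-t)).comp t (hasDerivAt_neg t)
    have h := hE.fun_mul (hasDerivAt_pow (n+1) t)
    refine h.congr_deriv ?_
    push_cast
    ring
  · apply Continuous.intervalIntegrable
    continuity


set_option maxHeartbeats 2000000 in
theorem lemma2_case_i (k x : ℝ) (hx : x ∈ Set.Ico (0 : ℝ) 1) :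
    ∃ n₀ : ℕ, ∀ n : ℕ, n₀ ≤ n →
      x + r n x k ∈ Set.Ico (-(1 : ℝ) / 3) (2 / 3) →
      Δfun n x k
        = c n 0 x - (∫ v in (0 : ℝ)..1, c n v x)
          + (x - 2 / 3) * (1 - c n 0 x * (((n : ℝ) + 1) / ((n : ℝ) + x)))
          + r (n + 1) x k
          - ((n : ℝ) + 1) / ((n : ℝ) + x) * c n 0 x * r n x k := by
  obtain ⟨hx0, hx1⟩ := hx
  refine ⟨1 + ⌈|k| / (x - 2/3)⌉₊, fun n hn hmem => ?_⟩
  have hn1 : 1 ≤ n := le_trans (Nat.le_add_right 1 _) hn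
  have hn1' : (1:ℝ) ≤ (n:ℝ) := by exact_mod_cast hn1
  set a : ℝ := (n:ℝ) + x with ha_def
  have ha : 0 < a := by simp only [ha_def]; linarith
  have hb : 0 < a + 1 := by linarith
  obtain ⟨hm1, hm2⟩ := hmem
  rw [r] at hm1 hm2
  rw [← ha_def] at hm1 hm2
  -- rule out x > 2/3
  have hx23 : x ≤ 2/3 := by
    by_contra hgt
    push_neg at hgt
    have hceil : |k| / (x - 2/3) ≤ (⌈|k| / (x - 2/3)⌉₊ : ℝ) := Nat.le_ceil _
    have hnn : (1:ℝ) + ⌈|k| / (x - 2/3)⌉₊ ≤ (n:ℝ) := by exact_mod_cast hn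
    have hlt : |k| / (x - 2/3) < (n:ℝ) := by linarith
    have h1 : |k| < (n:ℝ) * (x - 2/3) := by
      rw [div_lt_iff₀ (by linarith)] at hlt; linarith
    have h2 : k < (2/3 - x) * a := by
      have hdiv : k / a < 2/3 - x := by linarith
      rw [div_lt_iff₀ ha] at hdiv
      linarith
    nlinarith [abs_nonneg k, neg_abs_le k]
  -- membership for n+1
  have hm1' : -(1:ℝ)/3 ≤ x + k / (a+1) := by
    rcases le_or_gt 0 k with hk | hk
    · have : 0 ≤ k / (a+1) := div_nonneg hk hb.le
      linarith
    · have : k / a ≤ k / (a+1) := by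
        rw [div_le_div_iff₀ ha hb]; nlinarith
      linarith
  have hm2' : x + k / (a+1) < 2/3 := by
    rcases lt_trichotomy k 0 with hk | hk | hk
    · have : k / (a+1) < 0 := div_neg_of_neg_of_pos hk hb
      rcases eq_or_lt_of_le hx23 with h | h
      · linarith
      · linarith
    · simp only [hk, zero_div, add_zero]
      simpa [hk] using hm2
    · have : k / (a+1) ≤ k / a := by
        rw [div_le_div_iff₀ hb ha]; nlinarith
      linarith
  -- explicit forms of w
  have hwform : ∀ (m : ℕ) (hf0 : 0 ≤ x + 1/3 + k/((m:ℝ)+x)) (hf1 : x + 1/3 + k/((m:ℝ)+x) < 1),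
      w m x k = ∑ j ∈ Finset.range m, Real.exp (-((m:ℝ)+x)) * ((m:ℝ)+x)^j / (j.factorial : ℝ)
        + Real.exp (-((m:ℝ)+x)) * ((m:ℝ)+x)^m / (m.factorial : ℝ) * (x + 1/3 + k/((m:ℝ)+x)) := by
    intro m h0 h1
    have ham : (0:ℝ) ≤ (m:ℝ) + x := by positivity
    have harg : (m : ℝ) + x + 1 / 3 + k / ((m:ℝ) + x) = (m : ℝ) + (x + 1/3 + k/((m:ℝ)+x)) := by
      ring
    rw [w, harg, zMeasure_Iic_toReal ((m:ℝ)+x) m _ h0 h1]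
    have hpmf : ∀ j : ℕ, poissonPMFReal ((m:ℝ)+x).toNNReal j
        = Real.exp (-((m:ℝ)+x)) * ((m:ℝ)+x)^j / (j.factorial : ℝ) := by
      intro j
      unfold poissonPMFReal
      rw [Real.coe_toNNReal _ ham]
    simp_rw [hpmf]
  have hw1 : w n x k = ∑ j ∈ Finset.range n, Real.exp (-a) * a^j / (j.factorial : ℝ)
      + Real.exp (-a) * a^n / (n.factorial : ℝ) * (x + 1/3 + k/a) :=
    hwform n (by rw [← ha_def]; linarith) (by rw [← ha_def]; linarith)
  have hcast : ((n+1 : ℕ) : ℝ) + x = a + 1 := by push_cast; rw [ha_def]; ring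
  have hw2 : w (n+1) x k = ∑ j ∈ Finset.range (n+1), Real.exp (-(a+1)) * (a+1)^j / (j.factorial : ℝ)
      + Real.exp (-(a+1)) * (a+1)^(n+1) / ((n+1).factorial : ℝ) * (x + 1/3 + k/(a+1)) := by
    have := hwform (n+1) (by rw [hcast]; linarith) (by rw [hcast]; linarith)
    rw [hcast] at this
    exact this
  -- integrals
  set I : ℝ := ∫ t in a..(a+1), Real.exp (-t) * t^n with hI_def
  set J : ℝ := ∫ t in a..(a+1), Real.exp (-t) * t^(n+1) with hJ_def
  have hvftc : ((n:ℝ)+1) * I - J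
      = Real.exp (-(a+1)) * (a+1)^(n+1) - Real.exp (-a) * a^(n+1) := by
    have h := v_ftc n a
    have hc1 : Continuous fun t : ℝ => Real.exp (-t) := Real.continuous_exp.comp continuous_neg
    have hint1 : IntervalIntegrable (fun t : ℝ => ((n:ℝ)+1) * (Real.exp (-t) * t^n)) volume a (a+1) :=
      (continuous_const.mul (hc1.mul (continuous_pow n))).intervalIntegrable a (a+1)
    have hint2 : IntervalIntegrable (fun t : ℝ => Real.exp (-t) * t^(n+1)) volume a (a+1) :=
      (hc1.mul (continuous_pow (n+1))).intervalIntegrable a (a+1)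
    rw [intervalIntegral.integral_sub hint1 hint2, intervalIntegral.integral_const_mul] at h
    rw [← hI_def, ← hJ_def] at h
    exact h
  have hlftc : (∑ j ∈ Finset.range (n+1), Real.exp (-(a+1)) * (a+1)^j / (j.factorial : ℝ))
      - (∑ j ∈ Finset.range (n+1), Real.exp (-a) * a^j / (j.factorial : ℝ))
      = -(I / (n.factorial : ℝ)) := by
    have h := lambda_ftc n a
    rw [intervalIntegral.integral_div] at h
    rw [← hI_def] at h
    exact h
  -- integral of c
  have hcint : (∫ v in (0:ℝ)..1, c n v x) = Real.exp (a+1) / (a+1)^(n+1) * J := by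
    have hfun : Set.EqOn (fun v => c n v x)
        (fun v => Real.exp (a+1) / (a+1)^(n+1) * (Real.exp (-(v+a)) * (v+a)^(n+1)))
        (Set.uIcc (0:ℝ) 1) := by
      intro v _
      simp only [c]
      have h1 : (n:ℝ) + v + x = v + a := by rw [ha_def]; ring
      have h2 : (n:ℝ) + 1 + x = a + 1 := by rw [ha_def]; ring
      have h3 : Real.exp (1 - v) = Real.exp (a+1) * Real.exp (-(v+a)) := by
        rw [← Real.exp_add]; ring_nf
      rw [h1, h2, h3, div_pow]
      field_simp
    rw [intervalIntegral.integral_congr hfun, intervalIntegral.integral_const_mul]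
    congr 1
    have h := intervalIntegral.integral_comp_add_right (a := (0:ℝ)) (b := 1)
      (fun t => Real.exp (-t) * t^(n+1)) a
    rw [zero_add, add_comm (1:ℝ) a] at h
    exact h
  -- c at 0
  have hc0 : c n 0 x = (a/(a+1))^(n+1) * Real.exp 1 := by
    simp only [c]
    have h1 : (n:ℝ) + 0 + x = a := by rw [ha_def]; ring
    have h2 : (n:ℝ) + 1 + x = a + 1 := by rw [ha_def]; ring
    rw [h1, h2]
    norm_num
  -- final algebra
  have hgb : (n:ℝ) + 1 + x = a + 1 := by rw [ha_def]; ring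
  have hwdiff : w (n+1) x k - w n x k
      = -(I/(n.factorial:ℝ)) + Real.exp (-a)*a^n/(n.factorial:ℝ)*(1 - (x+1/3+k/a))
        + Real.exp (-(a+1))*(a+1)^(n+1)/((n+1).factorial:ℝ)*(x+1/3+k/(a+1)) := by
    rw [hw1, hw2]
    have hsplit : (∑ j ∈ Finset.range (n+1), Real.exp (-a) * a^j/(j.factorial:ℝ))
        = (∑ j ∈ Finset.range n, Real.exp (-a) * a^j/(j.factorial:ℝ))
          + Real.exp (-a)*a^n/(n.factorial:ℝ) := Finset.sum_range_succ _ n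
    have hl := hlftc
    linarith
  rw [Δfun, g, hgb, hwdiff, hcint, hc0, r, r]
  rw [hcast, ← ha_def]
  have hfac : ((n+1).factorial : ℝ) = ((n:ℝ)+1) * (n.factorial : ℝ) := by
    rw [Nat.factorial_succ]; push_cast; ring
  have hJval : J = ((n:ℝ)+1) * I - Real.exp (-(a+1)) * (a+1)^(n+1) + Real.exp (-a) * a^(n+1) := by
    linarith
  have hSdiff := hlftc
  have hexpa : Real.exp (-a) = Real.exp 1 * Real.exp (-(a+1)) := by
    rw [← Real.exp_add]; congr 1; ring
  have hexpb : Real.exp (a+1) * Real.exp (-(a+1)) = 1 := by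
    rw [← Real.exp_add, show a + 1 + -(a+1) = 0 by ring, Real.exp_zero]
  have hfn : (n.factorial : ℝ) ≠ 0 := by positivity
  have hpow : (a+1)^(n+1) ≠ 0 := by positivity
  have hE : Real.exp (-(a+1)) ≠ 0 := Real.exp_ne_zero _
  have hinv : Real.exp (a+1) = (Real.exp (-(a+1)))⁻¹ := by rw [Real.exp_neg, inv_inv]
  rw [hJval, hexpa, hinv, hfac, div_pow]
  have hane : a ≠ 0 := ha.ne'
  have hbne : a + 1 ≠ 0 := hb.ne'
  field_simp
  ring
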